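/- Let P be a partially ordered set and let W ⊆ σP be a final segment of σP, i.e., if I ∈ W, J ∈ σP and I ⊆ J then J ∈ W. Suppose there exists a subset T ⊆ P which, with the ordering induced from P, is a tree of height ω such that for every n ∈ ℕ the n-th level of T is a maximal antichain in P, and for every branch I of T the ideal {p ∈ P : p ≤ t for some t ∈ I} belongs to W. Then Odd has a winning strategy in BM(P, W). -/

import Mathlib

/-! Banach–Mazur game on a partially ordered set. -/

section BMposet

variable {P : Type*} [PartialOrder P]

/-- An ideal of a poset: downward closed and upward directed. -/
def IsIdeal (I : Set P) : Prop :=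
  (∀ x ∈ I, ∀ y, y ≤ x → y ∈ I) ∧ ∀ x ∈ I, ∀ y ∈ I, ∃ z ∈ I, x ≤ z ∧ y ≤ z

/-- A countably generated ideal: an ideal with a countable cofinal subset. -/
def IsCtblyGenIdeal (I : Set P) : Prop :=
  IsIdeal I ∧ ∃ C : Set P, C.Countable ∧ C ⊆ I ∧ ∀ x ∈ I, ∃ c ∈ C, x ≤ c

/-- The ideal generated by a play `u₀ ≤ u₁ ≤ ⋯`. -/
def playIdeal (u : ℕ → P) : Set P := {p | ∃ n, p ≤ u n}

/-- A finite sequence is increasing. -/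
def IncrSeq {m : ℕ} (v : Fin m → P) : Prop := ∀ i j : Fin m, i ≤ j → v i ≤ v j

/-- A strategy for Odd: a value for every finite sequence of odd length. -/
def OddStrategy (P : Type*) := (k : ℕ) → (Fin (2 * k + 1) → P) → P

/-- A strategy for Odd is valid if it assigns, to every finite increasing
sequence of odd length, an element above its last term. -/
def OddValid (s : OddStrategy P) : Prop :=
  ∀ (k : ℕ) (v : Fin (2 * k + 1) → P), IncrSeq v → v (Fin.last (2 * k)) ≤ s k v

/-- A play follows Odd's strategy `s` if every odd-indexed term is the value of
`s` on the preceding terms. -/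
def OddFollows (u : ℕ → P) (s : OddStrategy P) : Prop :=
  ∀ k : ℕ, u (2 * k + 1) = s k (fun i => u i.val)

/-- Odd has a winning strategy in the Banach–Mazur game `BM(P, W)`. -/
def OddWins (P : Type*) [PartialOrder P] (W : Set (Set P)) : Prop :=
  ∃ s : OddStrategy P, OddValid s ∧
    ∀ u : ℕ → P, Monotone u → OddFollows u s → playIdeal u ∈ W

/-- A strategy for Eve: a value for the empty sequence and for every finite
sequence of even positive length. -/
def EveStrategy (P : Type*) := (k : ℕ) → (Fin (2 * k) → P) → P

/-- A strategy for Eve is valid if it assigns, to every finite increasing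
sequence of even length, an element above all its terms (for the empty
sequence this is no restriction). -/
def EveValid (e : EveStrategy P) : Prop :=
  ∀ (k : ℕ) (v : Fin (2 * k) → P), IncrSeq v → ∀ i : Fin (2 * k), v i ≤ e k v

/-- A play follows Eve's strategy `e` if every even-indexed term is the value of
`e` on the preceding terms. -/
def EveFollows (u : ℕ → P) (e : EveStrategy P) : Prop :=
  ∀ k : ℕ, u (2 * k) = e k (fun i => u i.val)

/-- Eve has a winning strategy in the Banach–Mazur game `BM(P, W)`. -/
def EveWins (P : Type*) [PartialOrder P] (W : Set (Set P)) : Prop :=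
  ∃ e : EveStrategy P, EveValid e ∧
    ∀ u : ℕ → P, Monotone u → EveFollows u e → playIdeal u ∉ W

end BMposet

section Tree

variable {P : Type*} [PartialOrder P]

/-- The set of strict predecessors of `t` inside `T`. -/
def predSet (T : Set P) (t : P) : Set P := {x ∈ T | x < t}

/-- `T ⊆ P`, with the induced ordering, is a tree of height ω: the set of strict
predecessors of every element is a finite chain (hence well-ordered of finite
order type). -/
def IsOmegaTree (T : Set P) : Prop :=
  ∀ t ∈ T, (predSet T t).Finite ∧ IsChain (· ≤ ·) (predSet T t)

/-- The `n`-th level of a tree `T` of height ω: the elements with exactly `n`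
strict predecessors in `T`. -/
def treeLevel (T : Set P) (n : ℕ) : Set P := {t ∈ T | (predSet T t).ncard = n}

/-- Two elements of `P` are compatible if they have a common upper bound. -/
def Compat (x y : P) : Prop := ∃ z : P, x ≤ z ∧ y ≤ z

/-- A maximal antichain in `P`: a set of pairwise incompatible elements such that
every element of `P` is compatible with some member. -/
def IsMaxAntichainIn (A : Set P) : Prop :=
  (∀ x ∈ A, ∀ y ∈ A, x ≠ y → ¬ Compat x y) ∧ ∀ p : P, ∃ a ∈ A, Compat p a

/-- A branch of `T`: a maximal chain contained in `T`. -/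
def IsBranch (T I : Set P) : Prop :=
  I ⊆ T ∧ IsChain (· ≤ ·) I ∧ ∀ J : Set P, J ⊆ T → IsChain (· ≤ ·) J → I ⊆ J → J = I

end Tree

section AuxLemmas

variable {P : Type*} [PartialOrder P]

/-- An element at level `k+1` has a predecessor at level `k`. -/
lemma exists_pred_level {T : Set P} (htree : IsOmegaTree T) {t : P} {k : ℕ}
    (ht : t ∈ treeLevel T (k + 1)) : ∃ s ∈ treeLevel T k, s < t := by
  obtain ⟨htT, hcard⟩ := ht
  obtain ⟨hfin, hchain⟩ := htree t htT
  have hne : (predSet T t).Nonempty := by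
    rcases Set.eq_empty_or_nonempty (predSet T t) with h | h
    · rw [h, Set.ncard_empty] at hcard; omega
    · exact h
  obtain ⟨s, hs, hmax'⟩ := Set.Finite.exists_maximal hfin hne
  have hmax : ∀ a ∈ predSet T t, s ≤ a → s = a := fun a ha h => le_antisymm h (hmax' ha h)
  have heq : predSet T s = predSet T t \ {s} := by
    ext x
    constructor
    · rintro ⟨hxT, hxs⟩
      exact ⟨⟨hxT, hxs.trans hs.2⟩, fun hx => absurd (hx ▸ hxs) (lt_irrefl s)⟩
    · rintro ⟨⟨hxT, hxt⟩, hxne⟩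
      have hxne' : x ≠ s := hxne
      rcases hchain ⟨hxT, hxt⟩ hs hxne' with h | h
      · exact ⟨hxT, lt_of_le_of_ne h hxne'⟩
      · exact absurd (hmax x ⟨hxT, hxt⟩ h).symm hxne'
  refine ⟨s, ⟨hs.1, ?_⟩, hs.2⟩
  rw [heq, Set.ncard_diff_singleton_of_mem hs, hcard]
  omega

/-- Two elements of a maximal antichain lying below a common element coincide. -/
lemma level_eq_of_le {A : Set P} (hA : IsMaxAntichainIn A) {a b z : P}
    (ha : a ∈ A) (hb : b ∈ A) (haz : a ≤ z) (hbz : b ≤ z) : a = b := by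
  by_contra hne
  exact hA.1 a ha b hb hne ⟨z, haz, hbz⟩

end AuxLemmas

/-- Suppose `W ⊆ σP` is a final segment of `σP` and there is a
subset `T ⊆ P` which, with the induced ordering, is a tree of height ω, whose
every level is a maximal antichain in `P`, and such that for every branch `I` of
`T` the ideal generated by `I` belongs to `W`.  Then Odd has a winning strategy
in `BM(P, W)`. -/
theorem odd_wins_of_tree {P : Type*} [PartialOrder P] (W : Set (Set P))
    (hW : ∀ I ∈ W, IsCtblyGenIdeal I)
    (hfinal : ∀ I ∈ W, ∀ J : Set P, IsCtblyGenIdeal J → I ⊆ J → J ∈ W)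
    (T : Set P) (htree : IsOmegaTree T)
    (hlevels : ∀ n : ℕ, IsMaxAntichainIn (treeLevel T n))
    (hbranch : ∀ I : Set P, IsBranch T I → {p : P | ∃ t ∈ I, p ≤ t} ∈ W) :
    OddWins P W := by
  classical
  have key : ∀ (k : ℕ) (p : P), ∃ w : P, p ≤ w ∧ ∃ a ∈ treeLevel T k, a ≤ w := by
    intro k p
    obtain ⟨a, ha, z, hpz, haz⟩ := (hlevels k).2 p
    exact ⟨z, hpz, a, ha, haz⟩
  refine ⟨fun k v => (key k (v (Fin.last (2 * k)))).choose, ?_, ?_⟩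
  · intro k v _
    exact (key k (v (Fin.last (2 * k)))).choose_spec.1
  · intro u hu hf
    set tt : ℕ → P := fun k => (key k (u (2 * k))).choose_spec.2.choose with htt
    have htt_mem : ∀ k, tt k ∈ treeLevel T k :=
      fun k => (key k (u (2 * k))).choose_spec.2.choose_spec.1
    have htt_le : ∀ k, tt k ≤ u (2 * k + 1) := by
      intro k
      have h1 : u (2 * k + 1) = (key k (u (2 * k))).choose := hf k
      rw [h1]
      exact (key k (u (2 * k))).choose_spec.2.choose_spec.2
    have hlt : ∀ k, tt k < tt (k + 1) := by
      intro k
      obtain ⟨s, hs, hst⟩ := exists_pred_level htree (htt_mem (k + 1))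
      have h1 : tt (k + 1) ≤ u (2 * (k + 1) + 1) := htt_le (k + 1)
      have h2 : tt k ≤ u (2 * (k + 1) + 1) := (htt_le k).trans (hu (by omega))
      have h3 : s ≤ u (2 * (k + 1) + 1) := hst.le.trans h1
      have hse : s = tt k := level_eq_of_le (hlevels k) hs (htt_mem k) h3 h2
      rw [← hse]; exact hst
    have hmono : StrictMono tt := strictMono_nat_of_lt_succ hlt
    have hchain0 : IsChain (· ≤ ·) (Set.range tt) := by
      rintro _ ⟨i, rfl⟩ _ ⟨j, rfl⟩ _
      rcases le_total i j with h | h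
      · exact Or.inl (hmono.monotone h)
      · exact Or.inr (hmono.monotone h)
    have hsub0 : Set.range tt ⊆ T := by rintro _ ⟨i, rfl⟩; exact (htt_mem i).1
    -- Zorn: extend to a maximal chain in T
    obtain ⟨I, hsubI, hImax⟩ :=
      zorn_subset_nonempty {J : Set P | J ⊆ T ∧ IsChain (· ≤ ·) J}
        (fun c hcS hc hcne => by
          refine ⟨⋃₀ c, ⟨Set.sUnion_subset fun s hs => (hcS hs).1, ?_⟩,
            fun s hs => Set.subset_sUnion_of_mem hs⟩
          rintro x ⟨s, hsc, hxs⟩ y ⟨t', htc, hyt⟩ hne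
          rcases hc.total hsc htc with h | h
          · exact (hcS htc).2 (h hxs) hyt hne
          · exact (hcS hsc).2 hxs (h hyt) hne)
        (Set.range tt) ⟨hsub0, hchain0⟩
    have hIT : I ⊆ T := hImax.prop.1
    have hIchain : IsChain (· ≤ ·) I := hImax.prop.2
    have hbr : IsBranch T I := by
      refine ⟨hIT, hIchain, fun J hJT hJch hIJ => ?_⟩
      exact Set.Subset.antisymm (hImax.2 ⟨hJT, hJch⟩ hIJ) hIJ
    have hWI := hbranch I hbr
    have hplay : IsCtblyGenIdeal (playIdeal u) := by
      refine ⟨⟨?_, ?_⟩, Set.range u, Set.countable_range u, ?_, ?_⟩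
      · rintro x ⟨n, hn⟩ y hyx; exact ⟨n, hyx.trans hn⟩
      · rintro x ⟨n, hn⟩ y ⟨m, hm⟩
        exact ⟨u (max n m), ⟨max n m, le_rfl⟩, hn.trans (hu (le_max_left _ _)),
          hm.trans (hu (le_max_right _ _))⟩
      · rintro _ ⟨n, rfl⟩; exact ⟨n, le_rfl⟩
      · rintro x ⟨n, hn⟩; exact ⟨u n, ⟨n, rfl⟩, hn⟩
    apply hfinal _ hWI _ hplay
    rintro p ⟨x, hxI, hpx⟩
    have hxT : x ∈ T := hIT hxI
    set m := (predSet T x).ncard with hm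
    have httI : ∀ k, tt k ∈ I := fun k => hsubI ⟨k, rfl⟩
    have hxle : x ≤ tt (m + 1) := by
      rcases eq_or_ne x (tt (m + 1)) with h | h
      · exact h.le
      · rcases hIchain hxI (httI (m + 1)) h with h' | h'
        · exact h'
        · exfalso
          have hlt' : tt (m + 1) < x := lt_of_le_of_ne h' (Ne.symm h)
          have hsub : insert (tt (m + 1)) (predSet T (tt (m + 1))) ⊆ predSet T x := by
            rintro y (rfl | ⟨hyT, hylt⟩)
            · exact ⟨(htt_mem (m + 1)).1, hlt'⟩
            · exact ⟨hyT, hylt.trans hlt'⟩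
          have hfinx := (htree x hxT).1
          have hcard := Set.ncard_le_ncard hsub hfinx
          rw [Set.ncard_insert_of_notMem (fun hmem => lt_irrefl _ hmem.2)
              (htree _ (htt_mem (m + 1)).1).1, (htt_mem (m + 1)).2, ← hm] at hcard
          omega
    exact ⟨2 * (m + 1) + 1, hpx.trans (hxle.trans (htt_le (m + 1)))⟩
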